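/- Combining the Monteiro–Svaiter bound Σ_{i=1}^k A_i / λ_i^{(p+1)/(p−1)} ≤ C_p ‖x*‖² (with C_p = 8 (L_p/(p−1)!)^{2/(p−1)}), the reverse Hölder inequality, and sqrt(A_k) ≥ (1/2) Σ_{j≤k} sqrt(λ_j), one obtains: if positive sequences (A_k), (λ_k) satisfy these conditions, then A_k ≥ (1/4) (C_p‖x*‖²)^{−(p−1)/(p+1)} (Σ_{j=1}^k A_j^{(p−1)/(3p+1)})^{(3p+1)/(p+1)} for all k. -/

import Mathlib

/-- Key recursion: combining `∑ A i / λ i^{(p+1)/(p-1)} ≤ C_p ‖x*‖²`, reverse Hölder,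
and `sqrt (A k) ≥ (1/2) ∑ sqrt (λ j)` yields a lower bound on `A k`. -/
theorem key_recursion (d p : ℕ) (hp : 2 ≤ p) (L : ℝ) (hL : 0 < L)
    (xs : EuclideanSpace ℝ (Fin d)) (hxs : 0 < ‖xs‖)
    (Cp : ℝ) (hCp : Cp = 8 * (L / (Nat.factorial (p - 1) : ℝ)) ^ ((2 : ℝ) / (p - 1)))
    (A lam : ℕ → ℝ)
    (hApos : ∀ k, 1 ≤ k → 0 < A k) (hlampos : ∀ k, 1 ≤ k → 0 < lam k)
    (hAmono : ∀ j k, 1 ≤ j → j ≤ k → A j ≤ A k)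
    (hMS : ∀ k, 1 ≤ k →
      ∑ i ∈ Finset.Icc 1 k, A i / (lam i) ^ (((p : ℝ) + 1) / (p - 1)) ≤ Cp * ‖xs‖ ^ 2)
    (hsqrt : ∀ k, 1 ≤ k →
      Real.sqrt (A k) ≥ (1 / 2) * ∑ j ∈ Finset.Icc 1 k, Real.sqrt (lam j)) :
    ∀ k, 1 ≤ k →
      A k ≥ (1 / 4) * (Cp * ‖xs‖ ^ 2) ^ (-(((p : ℝ) - 1) / (p + 1))) *
        (∑ j ∈ Finset.Icc 1 k, (A j) ^ (((p : ℝ) - 1) / (3 * p + 1))) ^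
          ((3 * (p : ℝ) + 1) / (p + 1)) := by
  intro k hk
  set q : ℝ := (p : ℝ) with hqdef
  have hq : (2:ℝ) ≤ q := by rw [hqdef]; exact_mod_cast hp
  have hq1 : (0:ℝ) < q - 1 := by linarith
  have h3q : (0:ℝ) < 3 * q + 1 := by linarith
  have hqp1 : (0:ℝ) < q + 1 := by linarith
  set α : ℝ := (q + 1) / (q - 1) with hαdef
  set u : ℝ := (q - 1) / (3 * q + 1) with hudef
  set w : ℝ := (3 * q + 1) / (q + 1) with hwdef
  set v : ℝ := (2 * q + 2) / (3 * q + 1) with hvdef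
  have hu : 0 < u := div_pos hq1 h3q
  have hv : 0 < v := div_pos (by linarith) h3q
  have hw : 0 < w := div_pos h3q hqp1
  have huv : u + v = 1 := by rw [hudef, hvdef]; field_simp; ring
  have hu1 : u < 1 := by rw [hudef, div_lt_one h3q]; linarith
  set M : ℝ := Cp * ‖xs‖ ^ 2 with hMdef
  have hM : 0 < M :=
    lt_of_lt_of_le
      (div_pos (hApos 1 le_rfl) (Real.rpow_pos_of_pos (hlampos 1 le_rfl) α))
      (by simpa using hMS 1 le_rfl)
  set F := Finset.Icc 1 k with hFdef
  have hmem : ∀ i ∈ F, 1 ≤ i := fun i hi => (Finset.mem_Icc.mp hi).1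
  -- pointwise identity
  have hpoint : ∀ i ∈ F, (A i) ^ u = (A i / lam i ^ α) ^ u * (Real.sqrt (lam i)) ^ v := by
    intro i hi
    have hA := hApos i (hmem i hi)
    have hl := hlampos i (hmem i hi)
    have hαu : α * u = 1 / 2 * v := by rw [hαdef, hudef, hvdef]; field_simp
    have hX : (0:ℝ) < lam i ^ (1 / 2 * v) := Real.rpow_pos_of_pos hl _
    rw [Real.div_rpow hA.le (Real.rpow_nonneg hl.le α), ← Real.rpow_mul hl.le,
      Real.sqrt_eq_rpow, ← Real.rpow_mul hl.le, hαu, div_mul_cancel₀ _ hX.ne']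
  -- Hölder
  have hconj : Real.HolderConjugate u⁻¹ v⁻¹ :=
    ⟨by simpa [inv_inv] using huv, inv_pos.2 hu, inv_pos.2 hv⟩
  have hfnn : ∀ i ∈ F, (0:ℝ) ≤ (A i / lam i ^ α) ^ u := fun i hi =>
    Real.rpow_nonneg (div_nonneg (hApos i (hmem i hi)).le
      (Real.rpow_nonneg (hlampos i (hmem i hi)).le α)) u
  have hgnn : ∀ i ∈ F, (0:ℝ) ≤ (Real.sqrt (lam i)) ^ v := fun i hi =>
    Real.rpow_nonneg (Real.sqrt_nonneg _) v
  have holder :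
      ∑ i ∈ F, (A i) ^ u ≤
        (∑ i ∈ F, A i / lam i ^ α) ^ u * (∑ i ∈ F, Real.sqrt (lam i)) ^ v := by
    have H := Real.inner_le_Lp_mul_Lq_of_nonneg (s := F)
      (f := fun i => (A i / lam i ^ α) ^ u) (g := fun i => (Real.sqrt (lam i)) ^ v)
      hconj hfnn hgnn
    have e1 : ∀ i ∈ F, ((A i / lam i ^ α) ^ u) ^ (u⁻¹) = A i / lam i ^ α := fun i hi =>
      Real.rpow_rpow_inv (div_nonneg (hApos i (hmem i hi)).le
        (Real.rpow_nonneg (hlampos i (hmem i hi)).le α)) hu.ne'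
    have e2 : ∀ i ∈ F, ((Real.sqrt (lam i)) ^ v) ^ (v⁻¹) = Real.sqrt (lam i) := fun i hi =>
      Real.rpow_rpow_inv (Real.sqrt_nonneg _) hv.ne'
    rw [Finset.sum_congr rfl e1, Finset.sum_congr rfl e2, one_div, one_div, inv_inv, inv_inv]
      at H
    calc ∑ i ∈ F, (A i) ^ u
        = ∑ i ∈ F, (A i / lam i ^ α) ^ u * (Real.sqrt (lam i)) ^ v :=
          Finset.sum_congr rfl hpoint
      _ ≤ _ := H
  -- bound the two factors
  have hsa : (0:ℝ) ≤ ∑ i ∈ F, A i / lam i ^ α :=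
    Finset.sum_nonneg fun i hi => div_nonneg (hApos i (hmem i hi)).le
      (Real.rpow_nonneg (hlampos i (hmem i hi)).le α)
  have hsb : (0:ℝ) ≤ ∑ i ∈ F, Real.sqrt (lam i) :=
    Finset.sum_nonneg fun i _ => Real.sqrt_nonneg _
  have h1 : ∑ i ∈ F, A i / lam i ^ α ≤ M := hMS k hk
  have h2 : ∑ i ∈ F, Real.sqrt (lam i) ≤ 2 * Real.sqrt (A k) := by
    have := hsqrt k hk; rw [ge_iff_le] at this; linarith
  have hsb2 : (0:ℝ) ≤ 2 * Real.sqrt (A k) := by positivity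
  set S := ∑ j ∈ F, (A j) ^ u with hSdef
  have hS0 : 0 ≤ S :=
    Finset.sum_nonneg fun i hi => Real.rpow_nonneg (hApos i (hmem i hi)).le u
  have hS_le : S ≤ M ^ u * (2 * Real.sqrt (A k)) ^ v :=
    le_trans holder (mul_le_mul (Real.rpow_le_rpow hsa h1 hu.le)
      (Real.rpow_le_rpow hsb h2 hv.le) (Real.rpow_nonneg hsb v)
      (Real.rpow_nonneg hM.le u))
  have huw : u * w = (q - 1) / (q + 1) := by rw [hudef, hwdef]; field_simp
  have hvw : v * w = 2 := by rw [hvdef, hwdef]; field_simp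
  have hSw : S ^ w ≤ M ^ ((q - 1) / (q + 1)) * (4 * A k) := by
    calc S ^ w ≤ (M ^ u * (2 * Real.sqrt (A k)) ^ v) ^ w :=
          Real.rpow_le_rpow hS0 hS_le hw.le
      _ = M ^ (u * w) * (2 * Real.sqrt (A k)) ^ (v * w) := by
          rw [Real.mul_rpow (Real.rpow_nonneg hM.le u) (Real.rpow_nonneg hsb2 v),
            ← Real.rpow_mul hM.le, ← Real.rpow_mul hsb2]
      _ = M ^ ((q - 1) / (q + 1)) * (4 * A k) := by
          rw [huw, hvw, show ((2:ℝ) : ℝ) = ((2:ℕ) : ℝ) by norm_num, Real.rpow_natCast]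
          rw [mul_pow, Real.sq_sqrt (hApos k hk).le]; ring
  have hMe : 0 < M ^ ((q - 1) / (q + 1)) := Real.rpow_pos_of_pos hM _
  rw [ge_iff_le, Real.rpow_neg hM.le]
  calc 1 / 4 * (M ^ ((q - 1) / (q + 1)))⁻¹ * S ^ w
      ≤ 1 / 4 * (M ^ ((q - 1) / (q + 1)))⁻¹ * (M ^ ((q - 1) / (q + 1)) * (4 * A k)) :=
        mul_le_mul_of_nonneg_left hSw (by positivity)
    _ = A k := by field_simp
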